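/- For all integers n ≥ 1 and p ≥ 1 the following identity holds in F: (h_n + y·h_{n−1})·(h̄_p + y⁻¹·h̄_{p−1}) − (h_{n−1} + y·h_{n−2})·(h̄_{p−1} + y⁻¹·h̄_{p−2}) = (x₁x₂x₃)·R/(Π·y)·[(x₂^{−p−1}x₃^{n} − x₂^{n}x₃^{−p−1})/(x₁+y) + (x₃^{−p−1}x₁^{n} − x₃^{n}x₁^{−p−1})/(x₂+y) + (x₁^{−p−1}x₂^{n} − x₁^{n}x₂^{−p−1})/(x₃+y)]. (The left side is ch(Sₙ⊗S_p*) − ch(S_{n−1}⊗S_{p−1}*), the character of the complementary summand Y in the splitting Sₙ⊗S_p* ≅ S_{n−1}⊗S_{p−1}* ⊕ Y obtained from the double Koszul complex; the right side equals the Su–Zhang atypical character of the irreducible gl(3|1)-module V(n,0,−p+1|1).) -/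

import Mathlib

noncomputable section

/-- The field of rational functions over ℚ in four variables. -/
abbrev F : Type := FractionRing (MvPolynomial (Fin 4) ℚ)

def x1 : F := algebraMap (MvPolynomial (Fin 4) ℚ) F (MvPolynomial.X 0)
def x2 : F := algebraMap (MvPolynomial (Fin 4) ℚ) F (MvPolynomial.X 1)
def x3 : F := algebraMap (MvPolynomial (Fin 4) ℚ) F (MvPolynomial.X 2)
def y  : F := algebraMap (MvPolynomial (Fin 4) ℚ) F (MvPolynomial.X 3)

/-- `R = (x₁+y)(x₂+y)(x₃+y)`. -/
def R : F := (x1 + y) * (x2 + y) * (x3 + y)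

/-- `Π = (x₁−x₂)(x₂−x₃)(x₁−x₃)`. -/
def P : F := (x1 - x2) * (x2 - x3) * (x1 - x3)

/-- `a(t,u,v)` : determinant of the 3×3 matrix with `i`-th row `(xᵢ^{t+2}, xᵢ^{u+1}, xᵢ^v)`. -/
def a (t u v : ℤ) : F :=
  Matrix.det !![x1 ^ (t+2), x1 ^ (u+1), x1 ^ v;
                x2 ^ (t+2), x2 ^ (u+1), x2 ^ v;
                x3 ^ (t+2), x3 ^ (u+1), x3 ^ v]

/-- Complete homogeneous symmetric polynomial of degree `k` in three variables
(`0` for `k < 0`). -/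
def hc (u v w : F) (k : ℤ) : F :=
  if k < 0 then 0
  else ∑ i ∈ Finset.range (k.toNat + 1), ∑ j ∈ Finset.range (k.toNat - i + 1),
    u ^ i * v ^ j * w ^ (k.toNat - i - j)

def h (k : ℤ) : F := hc x1 x2 x3 k

def hbar (k : ℤ) : F := hc x1⁻¹ x2⁻¹ x3⁻¹ k

/-- Elementary symmetric polynomials in `x₁, x₂, x₃`. -/
def e : ℕ → F
  | 0 => 1
  | 1 => x1 + x2 + x3
  | 2 => x1*x2 + x1*x3 + x2*x3
  | 3 => x1*x2*x3
  | _ => 0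

/-- Character of the `j`-th super exterior power `Λ_j`. -/
def lamCh (j : ℕ) : F := ∑ r ∈ Finset.range (min 3 j + 1), e r * y ^ (j - r)

/-- Character of the dual `S_j*` of the `j`-th super symmetric power. -/
def sBarCh (j : ℕ) : F := hbar j + y⁻¹ * hbar ((j : ℤ) - 1)

/-- Schur polynomial: `s_μ · Π = det (xᵢ^{μⱼ+3−j})`. -/
def schur (m1 m2 m3 : ℤ) : F := a m1 m2 m3 / P

lemma geom_aux (a b : F) (l : ℕ) :
    (∑ j ∈ Finset.range (l+1), a^j * b^(l-j)) * (a - b) = a^(l+1) - b^(l+1) := by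
  simpa using geom_sum₂_mul a b (l+1)

lemma hc_nat (u v w : F) (m : ℕ) :
    hc u v w (m : ℤ) * ((u-v)*(v-w)*(u-w))
      = u^(m+2)*(v-w) - v^(m+2)*(u-w) + w^(m+2)*(u-v) := by
  have h1 : hc u v w (m : ℤ) * (v - w)
      = v * (∑ i ∈ Finset.range (m+1), u^i * v^(m-i))
        - w * (∑ i ∈ Finset.range (m+1), u^i * w^(m-i)) := by
    rw [hc, if_neg (by exact_mod_cast (Int.not_lt.mpr (Int.natCast_nonneg m))),
        Int.toNat_natCast]
    rw [Finset.sum_mul, Finset.mul_sum, Finset.mul_sum, ← Finset.sum_sub_distrib]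
    refine Finset.sum_congr rfl fun i hi => ?_
    have expand : (∑ j ∈ Finset.range (m-i+1), u^i * v^j * w^(m-i-j))
        = u^i * ∑ j ∈ Finset.range (m-i+1), v^j * w^(m-i-j) := by
      rw [Finset.mul_sum]; exact Finset.sum_congr rfl fun j _ => by ring
    rw [expand, mul_assoc, geom_aux v w (m - i)]
    ring
  have k1 := geom_aux u v m
  have k2 := geom_aux u w m
  linear_combination (u-v)*(u-w)*h1 + v*(u-w)*k1 - w*(u-v)*k2

lemma hc_int (u v w : F) (k : ℤ) (hk : -2 ≤ k) :
    hc u v w k * ((u-v)*(v-w)*(u-w))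
      = u^(k+2)*(v-w) - v^(k+2)*(u-w) + w^(k+2)*(u-v) := by
  rcases lt_or_ge k 0 with hneg | hpos
  · rw [hc, if_pos hneg, zero_mul]
    interval_cases k
    · norm_num
    · norm_num [zpow_one]; ring
  · obtain ⟨m, rfl⟩ := Int.eq_ofNat_of_zero_le hpos
    rw [show ((m:ℤ)+2) = ((m+2 : ℕ) : ℤ) by push_cast; ring,
        zpow_natCast, zpow_natCast, zpow_natCast]
    exact hc_nat u v w m
lemma algMap_ne {q : MvPolynomial (Fin 4) ℚ} (hq : q ≠ 0) :
    algebraMap (MvPolynomial (Fin 4) ℚ) F q ≠ 0 := fun h =>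
  hq ((IsFractionRing.to_map_eq_zero_iff (K := F)).mp h)

lemma poly_ne {q : MvPolynomial (Fin 4) ℚ} (c : Fin 4 → ℚ)
    (hq : MvPolynomial.eval c q ≠ 0) : q ≠ 0 := fun h => hq (by rw [h]; simp)

lemma hx1 : x1 ≠ 0 := algMap_ne (poly_ne ![1,2,4,8] (by simp))
lemma hx2 : x2 ≠ 0 := algMap_ne (poly_ne ![1,2,4,8] (by simp))
lemma hx3 : x3 ≠ 0 := algMap_ne (poly_ne ![1,2,4,8] (by simp))
lemma hy : y ≠ 0 := algMap_ne (poly_ne ![1,2,4,8] (by simp))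

lemma hx12 : x1 - x2 ≠ 0 := by
  rw [x1, x2, ← map_sub]
  exact algMap_ne (poly_ne ![1,2,4,8] (by norm_num))

lemma hx23 : x2 - x3 ≠ 0 := by
  rw [x2, x3, ← map_sub]
  exact algMap_ne (poly_ne ![1,2,4,8] (by norm_num [Matrix.cons_val_two, Matrix.cons_val_three]))

lemma hx13 : x1 - x3 ≠ 0 := by
  rw [x1, x3, ← map_sub]
  exact algMap_ne (poly_ne ![1,2,4,8] (by norm_num [Matrix.cons_val_two, Matrix.cons_val_three]))

lemma h1y : x1 + y ≠ 0 := by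
  rw [x1, y, ← map_add]
  exact algMap_ne (poly_ne ![1,2,4,8] (by norm_num [Matrix.cons_val_two, Matrix.cons_val_three]))

lemma h2y : x2 + y ≠ 0 := by
  rw [x2, y, ← map_add]
  exact algMap_ne (poly_ne ![1,2,4,8] (by norm_num [Matrix.cons_val_two, Matrix.cons_val_three]))

lemma h3y : x3 + y ≠ 0 := by
  rw [x3, y, ← map_add]
  exact algMap_ne (poly_ne ![1,2,4,8] (by norm_num [Matrix.cons_val_two, Matrix.cons_val_three]))

lemma zpow_add_two' (z : F) (hz : z ≠ 0) (k : ℤ) : z ^ (k+2) = z^k * z * z := by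
  rw [show k+2 = k+1+1 by ring, zpow_add_one₀ hz, zpow_add_one₀ hz]
set_option maxHeartbeats 4000000 in
/-- `ch(Sₙ⊗S_p*) − ch(S_{n−1}⊗S_{p−1}*)`, the character of the complementary summand `Y`
in the splitting `Sₙ⊗S_p* ≅ S_{n−1}⊗S_{p−1}* ⊕ Y`, equals the Su–Zhang atypical character
of `V(n,0,−p+1|1)`. -/
theorem stmt_9 (n p : ℤ) (hn : 1 ≤ n) (hp : 1 ≤ p) :
    (h n + y * h (n-1)) * (hbar p + y⁻¹ * hbar (p-1))
      - (h (n-1) + y * h (n-2)) * (hbar (p-1) + y⁻¹ * hbar (p-2))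
    = (x1*x2*x3) * R / (P * y) *
        ((x2 ^ (-p-1) * x3 ^ n - x2 ^ n * x3 ^ (-p-1)) / (x1 + y)
         + (x3 ^ (-p-1) * x1 ^ n - x3 ^ n * x1 ^ (-p-1)) / (x2 + y)
         + (x1 ^ (-p-1) * x2 ^ n - x1 ^ n * x2 ^ (-p-1)) / (x3 + y)) := by
  have hx1 := hx1; have hx2 := hx2; have hx3 := hx3; have hy := hy
  have hx12 := hx12; have hx23 := hx23; have hx13 := hx13
  have h1y := h1y; have h2y := h2y; have h3y := h3y
  have hi12 : x1⁻¹ - x2⁻¹ ≠ 0 :=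
    sub_ne_zero.mpr fun q => (sub_ne_zero.mp hx12) (inv_injective q)
  have hi23 : x2⁻¹ - x3⁻¹ ≠ 0 :=
    sub_ne_zero.mpr fun q => (sub_ne_zero.mp hx23) (inv_injective q)
  have hi13 : x1⁻¹ - x3⁻¹ ≠ 0 :=
    sub_ne_zero.mpr fun q => (sub_ne_zero.mp hx13) (inv_injective q)
  have hPne : (x1-x2)*(x2-x3)*(x1-x3) ≠ 0 := mul_ne_zero (mul_ne_zero hx12 hx23) hx13
  have hDne : (x1⁻¹-x2⁻¹)*(x2⁻¹-x3⁻¹)*(x1⁻¹-x3⁻¹) ≠ 0 :=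
    mul_ne_zero (mul_ne_zero hi12 hi23) hi13
  have key1 : h n * ((x1-x2)*(x2-x3)*(x1-x3))
      = x1^(n+2)*(x2-x3) - x2^(n+2)*(x1-x3) + x3^(n+2)*(x1-x2) :=
    hc_int x1 x2 x3 n (by linarith)
  have key2 : h (n-1) * ((x1-x2)*(x2-x3)*(x1-x3))
      = x1^(n-1+2)*(x2-x3) - x2^(n-1+2)*(x1-x3) + x3^(n-1+2)*(x1-x2) :=
    hc_int x1 x2 x3 (n-1) (by linarith)
  have key3 : h (n-2) * ((x1-x2)*(x2-x3)*(x1-x3))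
      = x1^(n-2+2)*(x2-x3) - x2^(n-2+2)*(x1-x3) + x3^(n-2+2)*(x1-x2) :=
    hc_int x1 x2 x3 (n-2) (by linarith)
  have key4 : hbar p * ((x1⁻¹-x2⁻¹)*(x2⁻¹-x3⁻¹)*(x1⁻¹-x3⁻¹))
      = (x1⁻¹)^(p+2)*(x2⁻¹-x3⁻¹) - (x2⁻¹)^(p+2)*(x1⁻¹-x3⁻¹) + (x3⁻¹)^(p+2)*(x1⁻¹-x2⁻¹) :=
    hc_int x1⁻¹ x2⁻¹ x3⁻¹ p (by linarith)
  have key5 : hbar (p-1) * ((x1⁻¹-x2⁻¹)*(x2⁻¹-x3⁻¹)*(x1⁻¹-x3⁻¹))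
      = (x1⁻¹)^(p-1+2)*(x2⁻¹-x3⁻¹) - (x2⁻¹)^(p-1+2)*(x1⁻¹-x3⁻¹) + (x3⁻¹)^(p-1+2)*(x1⁻¹-x2⁻¹) :=
    hc_int x1⁻¹ x2⁻¹ x3⁻¹ (p-1) (by linarith)
  have key6 : hbar (p-2) * ((x1⁻¹-x2⁻¹)*(x2⁻¹-x3⁻¹)*(x1⁻¹-x3⁻¹))
      = (x1⁻¹)^(p-2+2)*(x2⁻¹-x3⁻¹) - (x2⁻¹)^(p-2+2)*(x1⁻¹-x3⁻¹) + (x3⁻¹)^(p-2+2)*(x1⁻¹-x2⁻¹) :=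
    hc_int x1⁻¹ x2⁻¹ x3⁻¹ (p-2) (by linarith)
  -- normalize exponents
  rw [zpow_add_two' x1 hx1 n, zpow_add_two' x2 hx2 n, zpow_add_two' x3 hx3 n] at key1
  rw [show n-1+2 = n+1 by ring, zpow_add_one₀ hx1, zpow_add_one₀ hx2,
      zpow_add_one₀ hx3] at key2
  rw [show n-2+2 = n by ring] at key3
  rw [zpow_add_two' x1⁻¹ (inv_ne_zero hx1) p, zpow_add_two' x2⁻¹ (inv_ne_zero hx2) p,
      zpow_add_two' x3⁻¹ (inv_ne_zero hx3) p, inv_zpow, inv_zpow, inv_zpow,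
      ← zpow_neg, ← zpow_neg, ← zpow_neg] at key4
  rw [show p-1+2 = p+1 by ring, zpow_add_one₀ (inv_ne_zero hx1),
      zpow_add_one₀ (inv_ne_zero hx2), zpow_add_one₀ (inv_ne_zero hx3),
      inv_zpow, inv_zpow, inv_zpow, ← zpow_neg, ← zpow_neg, ← zpow_neg] at key5
  rw [show p-2+2 = p by ring, inv_zpow, inv_zpow, inv_zpow,
      ← zpow_neg, ← zpow_neg, ← zpow_neg] at key6
  rw [show -p-1 = -p + -1 by ring, zpow_add₀ hx1, zpow_add₀ hx2, zpow_add₀ hx3,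
      zpow_neg_one, zpow_neg_one, zpow_neg_one]
  -- abstract the symbolic powers
  set A := x1 ^ n with hA
  set B := x2 ^ n with hB
  set C := x3 ^ n with hC
  set U := x1 ^ (-p) with hU
  set V := x2 ^ (-p) with hV
  set W := x3 ^ (-p) with hW
  have i1 : x1 * x1⁻¹ = 1 := mul_inv_cancel₀ hx1
  have i2 : x2 * x2⁻¹ = 1 := mul_inv_cancel₀ hx2
  have i3 : x3 * x3⁻¹ = 1 := mul_inv_cancel₀ hx3
  have d0 : ((x1⁻¹-x2⁻¹)*(x2⁻¹-x3⁻¹)*(x1⁻¹-x3⁻¹)) * (x1*x2*x3)^2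
      = -((x1-x2)*(x2-x3)*(x1-x3)) := by
    linear_combination (-x2^2*x3^2*x3⁻¹ + x2^2*x3^2*x2⁻¹ + x1*x2^2*x3^2*x3⁻¹^2 - x1*x2^2*x3^2*x2⁻¹^2 - x1*x2^2*x3^2*x1⁻¹*x3⁻¹ + x1*x2^2*x3^2*x1⁻¹*x2⁻¹) * i1 + (x2*x3^2 - x1*x3^2 - x1*x2*x3^2*x2⁻¹ + x1^2*x3^2*x3⁻¹ - x1^2*x2*x3^2*x3⁻¹^2 + x1^2*x2*x3^2*x2⁻¹*x3⁻¹) * i2 + (-x2^2*x3 + x1*x2^2 + x1*x2^2*x3*x3⁻¹ + x1^2*x3 - x1^2*x2 - x1^2*x2*x3*x3⁻¹) * i3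
  have d4 : (U*x1⁻¹*x1⁻¹*(x2⁻¹-x3⁻¹) - V*x2⁻¹*x2⁻¹*(x1⁻¹-x3⁻¹)
      + W*x3⁻¹*x3⁻¹*(x1⁻¹-x2⁻¹)) * (x1*x2*x3)^2
      = -(U*x2*x3*(x2-x3) - V*x1*x3*(x1-x3) + W*x1*x2*(x1-x2)) := by
    linear_combination (-x2^2*x3^2*x3⁻¹*U + x2^2*x3^2*x2⁻¹*U + x1*x2^2*x3^2*x3⁻¹^2*W - x1*x2^2*x3^2*x2⁻¹^2*V - x1*x2^2*x3^2*x1⁻¹*x3⁻¹*U + x1*x2^2*x3^2*x1⁻¹*x2⁻¹*U) * i1 + (x2*x3^2*U - x1*x3^2*V - x1*x2*x3^2*x2⁻¹*V + x1^2*x3^2*x3⁻¹*V - x1^2*x2*x3^2*x3⁻¹^2*W + x1^2*x2*x3^2*x2⁻¹*x3⁻¹*V) * i2 + (-x2^2*x3*U + x1*x2^2*W + x1*x2^2*x3*x3⁻¹*W + x1^2*x3*V - x1^2*x2*W - x1^2*x2*x3*x3⁻¹*W) * i3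
  have d5 : (U*x1⁻¹*(x2⁻¹-x3⁻¹) - V*x2⁻¹*(x1⁻¹-x3⁻¹) + W*x3⁻¹*(x1⁻¹-x2⁻¹)) * (x1*x2*x3)^2
      = -(x1*x2*x3*(U*(x2-x3) - V*(x1-x3) + W*(x1-x2))) := by
    linear_combination (x1*x2^2*x3^2*x3⁻¹*W - x1*x2^2*x3^2*x3⁻¹*U - x1*x2^2*x3^2*x2⁻¹*V + x1*x2^2*x3^2*x2⁻¹*U) * i1 + (-x1*x2*x3^2*V + x1*x2*x3^2*U - x1^2*x2*x3^2*x3⁻¹*W + x1^2*x2*x3^2*x3⁻¹*V) * i2 + (x1*x2^2*x3*W - x1*x2^2*x3*U - x1^2*x2*x3*W + x1^2*x2*x3*V) * i3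
  have d6 : (U*(x2⁻¹-x3⁻¹) - V*(x1⁻¹-x3⁻¹) + W*(x1⁻¹-x2⁻¹)) * (x1*x2*x3)^2
      = -(x1*x2*x3*(U*x1*(x2-x3) - V*x2*(x1-x3) + W*x3*(x1-x2))) := by
    linear_combination (x1*x2^2*x3^2*W - x1*x2^2*x3^2*V) * i1 + (-x1^2*x2*x3^2*W + x1^2*x2*x3^2*U) * i2 + (x1^2*x2^2*x3*V - x1^2*x2^2*x3*U) * i3
  have key4' : hbar p * (((x1⁻¹-x2⁻¹)*(x2⁻¹-x3⁻¹)*(x1⁻¹-x3⁻¹)) * (x1*x2*x3)^2)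
      = (U*x1⁻¹*x1⁻¹*(x2⁻¹-x3⁻¹) - V*x2⁻¹*x2⁻¹*(x1⁻¹-x3⁻¹)
        + W*x3⁻¹*x3⁻¹*(x1⁻¹-x2⁻¹)) * (x1*x2*x3)^2 := by rw [← mul_assoc, key4]
  have key5' : hbar (p-1) * (((x1⁻¹-x2⁻¹)*(x2⁻¹-x3⁻¹)*(x1⁻¹-x3⁻¹)) * (x1*x2*x3)^2)
      = (U*x1⁻¹*(x2⁻¹-x3⁻¹) - V*x2⁻¹*(x1⁻¹-x3⁻¹)
        + W*x3⁻¹*(x1⁻¹-x2⁻¹)) * (x1*x2*x3)^2 := by rw [← mul_assoc, key5]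
  have key6' : hbar (p-2) * (((x1⁻¹-x2⁻¹)*(x2⁻¹-x3⁻¹)*(x1⁻¹-x3⁻¹)) * (x1*x2*x3)^2)
      = (U*(x2⁻¹-x3⁻¹) - V*(x1⁻¹-x3⁻¹) + W*(x1⁻¹-x2⁻¹)) * (x1*x2*x3)^2 := by
    rw [← mul_assoc, key6]
  rw [d0, d4] at key4'
  rw [d0, d5] at key5'
  rw [d0, d6] at key6'
  have kb1 : hbar p * ((x1-x2)*(x2-x3)*(x1-x3))
      = U*x2*x3*(x2-x3) - V*x1*x3*(x1-x3) + W*x1*x2*(x1-x2) := by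
    linear_combination -key4'
  have kb2 : hbar (p-1) * ((x1-x2)*(x2-x3)*(x1-x3))
      = x1*x2*x3*(U*(x2-x3) - V*(x1-x3) + W*(x1-x2)) := by
    linear_combination -key5'
  have kb3 : hbar (p-2) * ((x1-x2)*(x2-x3)*(x1-x3))
      = x1*x2*x3*(U*x1*(x2-x3) - V*x2*(x1-x3) + W*x3*(x1-x2)) := by
    linear_combination -key6'
  have iy : y * y⁻¹ = 1 := mul_inv_cancel₀ hy
  have hK : ((x1-x2)*(x2-x3)*(x1-x3))^2 * y ≠ 0 :=
    mul_ne_zero (pow_ne_zero 2 hPne) hy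
  have step1 : ((h n + y * h (n - 1)) * (hbar p + y⁻¹ * hbar (p - 1)) -
        (h (n - 1) + y * h (n - 2)) * (hbar (p - 1) + y⁻¹ * hbar (p - 2)))
        * (((x1-x2)*(x2-x3)*(x1-x3))^2 * y)
      = ((A*x1*x1*(x2-x3) - B*x2*x2*(x1-x3) + C*x3*x3*(x1-x2))
          + y*(A*x1*(x2-x3) - B*x2*(x1-x3) + C*x3*(x1-x2)))
        * (y*(U*x2*x3*(x2-x3) - V*x1*x3*(x1-x3) + W*x1*x2*(x1-x2))
          + (x1*x2*x3*(U*(x2-x3) - V*(x1-x3) + W*(x1-x2))))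
      - ((A*x1*(x2-x3) - B*x2*(x1-x3) + C*x3*(x1-x2))
          + y*(A*(x2-x3) - B*(x1-x3) + C*(x1-x2)))
        * (y*(x1*x2*x3*(U*(x2-x3) - V*(x1-x3) + W*(x1-x2)))
          + (x1*x2*x3*(U*x1*(x2-x3) - V*x2*(x1-x3) + W*x3*(x1-x2)))) := by
    linear_combination
      (y*(hbar p * ((x1-x2)*(x2-x3)*(x1-x3)))) * key1
      + (y*(A*x1*x1*(x2-x3) - B*x2*x2*(x1-x3) + C*x3*x3*(x1-x2))) * kb1
      + (hbar (p-1) * ((x1-x2)*(x2-x3)*(x1-x3))) * key1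
      + (A*x1*x1*(x2-x3) - B*x2*x2*(x1-x3) + C*x3*x3*(x1-x2)) * kb2
      + (y^2*(hbar p * ((x1-x2)*(x2-x3)*(x1-x3)))) * key2
      + (y^2*(A*x1*(x2-x3) - B*x2*(x1-x3) + C*x3*(x1-x2))) * kb1
      - (hbar (p-2) * ((x1-x2)*(x2-x3)*(x1-x3))) * key2
      - (A*x1*(x2-x3) - B*x2*(x1-x3) + C*x3*(x1-x2)) * kb3
      - (y^2*(hbar (p-1) * ((x1-x2)*(x2-x3)*(x1-x3)))) * key3
      - (y^2*(A*(x2-x3) - B*(x1-x3) + C*(x1-x2))) * kb2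
      - (y*(hbar (p-2) * ((x1-x2)*(x2-x3)*(x1-x3)))) * key3
      - (y*(A*(x2-x3) - B*(x1-x3) + C*(x1-x2))) * kb3
      + (((x1-x2)*(x2-x3)*(x1-x3))^2
          * (h n * hbar (p-1) + y*(h (n-1) * hbar (p-1))
            - h (n-1) * hbar (p-2) - y*(h (n-2) * hbar (p-2)))) * iy
  have step2 : (x1 * x2 * x3 * ((x1 + y) * (x2 + y) * (x3 + y))
        / ((x1 - x2) * (x2 - x3) * (x1 - x3) * y) *
        ((V * x2⁻¹ * C - B * (W * x3⁻¹)) / (x1 + y)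
          + (W * x3⁻¹ * A - C * (U * x1⁻¹)) / (x2 + y)
          + (U * x1⁻¹ * B - A * (V * x2⁻¹)) / (x3 + y)))
        * (((x1-x2)*(x2-x3)*(x1-x3))^2 * y)
      = ((A*x1*x1*(x2-x3) - B*x2*x2*(x1-x3) + C*x3*x3*(x1-x2))
          + y*(A*x1*(x2-x3) - B*x2*(x1-x3) + C*x3*(x1-x2)))
        * (y*(U*x2*x3*(x2-x3) - V*x1*x3*(x1-x3) + W*x1*x2*(x1-x2))
          + (x1*x2*x3*(U*(x2-x3) - V*(x1-x3) + W*(x1-x2))))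
      - ((A*x1*(x2-x3) - B*x2*(x1-x3) + C*x3*(x1-x2))
          + y*(A*(x2-x3) - B*(x1-x3) + C*(x1-x2)))
        * (y*(x1*x2*x3*(U*(x2-x3) - V*(x1-x3) + W*(x1-x2)))
          + (x1*x2*x3*(U*x1*(x2-x3) - V*x2*(x1-x3) + W*x3*(x1-x2)))) := by
    field_simp
    ring1
  rw [R, P]
  exact mul_right_cancel₀ hK (step1.trans step2.symm)
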